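/- If ρ_eff : [0, r_s] → ℝ is continuous and monotonically non-increasing, and M(r) = ∫₀^r 4πξ²ρ_eff(ξ) dξ, then for all r ∈ [0, r_s], M(r) ≥ (r³/r_s³)·M(r_s). -/
import Mathlib


open Real intervalIntegral

theorem buchdahl_mass_bound
    (rs : ℝ) (hrs : 0 < rs)
    (ρeff : ℝ → ℝ)
    (hcont : ContinuousOn ρeff (Set.Icc 0 rs))
    (hmono : AntitoneOn ρeff (Set.Icc 0 rs))
    (M : ℝ → ℝ)
    (hM : ∀ r, M r = ∫ ξ in (0:ℝ)..r, 4 * Real.pi * ξ^2 * ρeff ξ) :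
    ∀ r ∈ Set.Icc (0:ℝ) rs, M r ≥ (r^3 / rs^3) * M rs := by
  intro r hr
  obtain ⟨hr0, hrrs⟩ := hr
  set c := ρeff r with hc
  have hrmem : r ∈ Set.Icc (0:ℝ) rs := ⟨hr0, hrrs⟩
  have hfc : ContinuousOn (fun ξ => 4 * Real.pi * ξ^2 * ρeff ξ) (Set.Icc 0 rs) := by
    exact (continuousOn_const.mul (continuousOn_pow 2)).mul hcont
  have hint1 : IntervalIntegrable (fun ξ => 4 * Real.pi * ξ^2 * ρeff ξ) MeasureTheory.volume 0 r := by
    apply ContinuousOn.intervalIntegrable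
    apply hfc.mono
    rw [Set.uIcc_of_le hr0]
    exact Set.Icc_subset_Icc le_rfl hrrs
  have hint2 : IntervalIntegrable (fun ξ => 4 * Real.pi * ξ^2 * ρeff ξ) MeasureTheory.volume r rs := by
    apply ContinuousOn.intervalIntegrable
    apply hfc.mono
    rw [Set.uIcc_of_le hrrs]
    exact Set.Icc_subset_Icc hr0 le_rfl
  have hintc1 : IntervalIntegrable (fun ξ => 4 * Real.pi * ξ^2 * c) MeasureTheory.volume 0 r := by
    apply Continuous.intervalIntegrable; continuity
  have hintc2 : IntervalIntegrable (fun ξ => 4 * Real.pi * ξ^2 * c) MeasureTheory.volume r rs := by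
    apply Continuous.intervalIntegrable; continuity
  have hcval : ∀ a b : ℝ, (∫ ξ in a..b, 4 * Real.pi * ξ^2 * c) = 4 * Real.pi * c * (b^3 - a^3) / 3 := by
    intro a b
    have : (∫ ξ in a..b, 4 * Real.pi * ξ^2 * c) = (4 * Real.pi * c) * ∫ ξ in a..b, ξ^2 := by
      rw [← intervalIntegral.integral_const_mul]
      congr 1; ext ξ; ring
    rw [this, integral_pow]
    push_cast; ring
  -- lower bound on M r
  have h1 : 4 * Real.pi * c * (r^3 - 0^3) / 3 ≤ M r := by
    rw [hM r, ← hcval 0 r]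
    apply intervalIntegral.integral_mono_on hr0 hintc1 hint1
    intro ξ hξ
    have hξmem : ξ ∈ Set.Icc (0:ℝ) rs := ⟨hξ.1, hξ.2.trans hrrs⟩
    have : c ≤ ρeff ξ := hmono hξmem hrmem hξ.2
    have hsq : (0:ℝ) ≤ 4 * Real.pi * ξ^2 := by positivity
    nlinarith
  -- upper bound on M rs - M r
  have h2 : M rs - M r ≤ 4 * Real.pi * c * (rs^3 - r^3) / 3 := by
    have hsplit : M rs - M r = ∫ ξ in r..rs, 4 * Real.pi * ξ^2 * ρeff ξ := by
      rw [hM rs, hM r, ← intervalIntegral.integral_add_adjacent_intervals hint1 hint2]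
      ring
    rw [hsplit, ← hcval r rs]
    apply intervalIntegral.integral_mono_on hrrs hint2 hintc2
    intro ξ hξ
    have hξmem : ξ ∈ Set.Icc (0:ℝ) rs := ⟨hr0.trans hξ.1, hξ.2⟩
    have : ρeff ξ ≤ c := hmono hrmem hξmem hξ.1
    have hsq : (0:ℝ) ≤ 4 * Real.pi * ξ^2 := by positivity
    nlinarith
  rw [ge_iff_le, div_mul_eq_mul_div, div_le_iff₀ (by positivity)]
  have hr3 : (0:ℝ) ≤ r^3 := by positivity
  have hdiff : (0:ℝ) ≤ rs^3 - r^3 := sub_nonneg.2 (pow_le_pow_left₀ hr0 hrrs 3)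
  nlinarith [mul_nonneg hdiff (sub_nonneg.2 h1), mul_nonneg hr3 (sub_nonneg.2 h2)]
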